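/- arXiv:1503.08717 — 3 statements merged into one kernel-verified Lean document; each statement's English description precedes it below -/
import Mathlib

section
/- Let q > 1, φ(s) := (cosh s)^{1−q} and V₁(s) := q(q−1)/cosh²(s). Then the integrals ∫_ℝ |φ'|² ds, ∫_ℝ V₁ φ² ds and ∫_ℝ φ² ds are finite and satisfy ∫_ℝ |φ'(s)|² ds − ∫_ℝ V₁(s) φ(s)² ds = −(q−1)² · ∫_ℝ φ(s)² ds; that is, the Rayleigh quotient of the Schrödinger operator −d²/ds² − V₁ at φ equals −(q−1)². -/
open MeasureTheory Real

/-- `φ(s) = (cosh s)^{1-q}` -/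
noncomputable def phi (q : ℝ) : ℝ → ℝ := fun s => Real.cosh s ^ (1 - q)

/-- `V₁(s) = q(q-1)/cosh²(s)` -/
noncomputable def V1 (q : ℝ) : ℝ → ℝ := fun s => q * (q - 1) / (Real.cosh s) ^ 2

lemma integrable_exp_neg_mul_abs' {b : ℝ} (hb : 0 < b) :
    Integrable (fun x : ℝ => Real.exp (-b * |x|)) := by
  have hIoi : IntegrableOn (fun x : ℝ => Real.exp (-b * |x|)) (Set.Ioi 0) := by
    refine (exp_neg_integrableOn_Ioi 0 hb).congr_fun (fun x hx => ?_) measurableSet_Ioi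
    rw [abs_of_pos (Set.mem_Ioi.mp hx)]
  rw [← integrableOn_univ, ← Set.Iio_union_Ici (a := (0:ℝ)), integrableOn_union,
    integrableOn_Ici_iff_integrableOn_Ioi]
  refine ⟨?_, hIoi⟩
  rw [← (Measure.measurePreserving_neg (volume : Measure ℝ)).integrableOn_comp_preimage
      (Homeomorph.neg ℝ).measurableEmbedding]
  simpa [Function.comp_def, abs_neg] using hIoi

lemma integrable_cosh_rpow {a : ℝ} (ha : a < 0) :
    Integrable (fun s : ℝ => Real.cosh s ^ a) := by
  have hcont : Continuous (fun s : ℝ => Real.cosh s ^ a) :=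
    Real.continuous_cosh.rpow_const (fun x => Or.inl (Real.cosh_pos x).ne')
  refine Integrable.mono' ((integrable_exp_neg_mul_abs' (b := -a) (by linarith)).const_mul
    ((2:ℝ) ^ (-a))) hcont.aestronglyMeasurable (Filter.Eventually.of_forall fun s => ?_)
  have hcp := Real.cosh_pos s
  rw [Real.norm_eq_abs, abs_of_nonneg (Real.rpow_nonneg hcp.le a)]
  have h1 : Real.exp |s| / 2 ≤ Real.cosh s := by
    rw [Real.cosh_eq]
    rcases abs_cases s with ⟨h, _⟩ | ⟨h, _⟩ <;> rw [h] <;>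
      [nlinarith [Real.exp_pos (-s)]; nlinarith [Real.exp_pos s]]
  calc Real.cosh s ^ a ≤ (Real.exp |s| / 2) ^ a :=
        Real.rpow_le_rpow_of_nonpos (by positivity) h1 ha.le
    _ = (2:ℝ) ^ (-a) * Real.exp (a * |s|) := by
        rw [Real.div_rpow (Real.exp_pos _).le (by norm_num),
          Real.rpow_neg (by norm_num : (0:ℝ) ≤ 2), ← Real.exp_mul, mul_comm |s| a,
          div_eq_mul_inv, mul_comm]
    _ = (2:ℝ) ^ (-a) * Real.exp (- -a * |s|) := by rw [neg_neg]

/-- The integrals `∫ |φ'|²`, `∫ V₁ φ²`, `∫ φ²` are finite and the Rayleigh quotient of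
`-d²/ds² - V₁` at `φ` equals `-(q-1)²`:
`∫ |φ'|² - ∫ V₁ φ² = -(q-1)² ∫ φ²`. -/
theorem phi_rayleigh_quotient (q : ℝ) (hq : 1 < q) :
    Integrable (fun s : ℝ => (deriv (phi q) s) ^ 2) ∧
    Integrable (fun s : ℝ => V1 q s * (phi q s) ^ 2) ∧
    Integrable (fun s : ℝ => (phi q s) ^ 2) ∧
    (∫ s : ℝ, (deriv (phi q) s) ^ 2) - (∫ s : ℝ, V1 q s * (phi q s) ^ 2) =
      -((q - 1) ^ 2) * ∫ s : ℝ, (phi q s) ^ 2 := by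
  have hd : ∀ s : ℝ, HasDerivAt (phi q)
      (Real.sinh s * (1 - q) * Real.cosh s ^ (1 - q - 1)) s := fun s =>
    (Real.hasDerivAt_cosh s).rpow_const (Or.inl (Real.cosh_pos s).ne')
  have iA : Integrable (fun s : ℝ => Real.cosh s ^ (2 - 2 * q)) :=
    integrable_cosh_rpow (by linarith)
  have iB : Integrable (fun s : ℝ => Real.cosh s ^ (-(2 * q))) :=
    integrable_cosh_rpow (by linarith)
  -- pointwise rewrites
  have hE2 : ∀ s : ℝ, Real.cosh s ^ (2 - 2 * q)
      = Real.cosh s ^ 2 * (Real.cosh s ^ (-q)) ^ 2 := fun s => by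
    have hcp := Real.cosh_pos s
    rw [show (2 - 2 * q : ℝ) = 1 + 1 + -q + -q by ring, Real.rpow_add hcp, Real.rpow_add hcp,
      Real.rpow_add hcp, Real.rpow_one]
    ring
  have hE3 : ∀ s : ℝ, Real.cosh s ^ (-(2 * q)) = (Real.cosh s ^ (-q)) ^ 2 := fun s => by
    rw [show (-(2 * q) : ℝ) = -q + -q by ring, Real.rpow_add (Real.cosh_pos s)]
    ring
  have hs2 : ∀ s : ℝ, Real.sinh s ^ 2 = Real.cosh s ^ 2 - 1 := fun s => by
    have := Real.cosh_sq s; linarith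
  have e1 : (fun s : ℝ => (deriv (phi q) s) ^ 2)
      = fun s => (q - 1) ^ 2 * Real.cosh s ^ (2 - 2 * q)
        - (q - 1) ^ 2 * Real.cosh s ^ (-(2 * q)) := by
    funext s
    rw [(hd s).deriv, show (1 - q - 1 : ℝ) = -q by ring, hE2 s, hE3 s]
    linear_combination ((q - 1) ^ 2 * (Real.cosh s ^ (-q)) ^ 2) * hs2 s
  have e3 : (fun s : ℝ => (phi q s) ^ 2) = fun s => Real.cosh s ^ (2 - 2 * q) := by
    funext s
    rw [phi, hE2 s, show (1 - q : ℝ) = 1 + -q by ring, Real.rpow_add (Real.cosh_pos s),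
      Real.rpow_one]
    ring
  have e2 : (fun s : ℝ => V1 q s * (phi q s) ^ 2)
      = fun s => q * (q - 1) * Real.cosh s ^ (-(2 * q)) := by
    funext s
    have hcp := Real.cosh_pos s
    have h3 : phi q s ^ 2 = Real.cosh s ^ (2 - 2 * q) := congrFun e3 s
    rw [V1, h3, hE2 s, hE3 s]
    field_simp
  -- FTC : derivative of sinh * cosh^(1-2q) integrates to zero
  have hG : ∀ s : ℝ, HasDerivAt (fun s : ℝ => Real.sinh s * Real.cosh s ^ (1 - 2 * q))
      ((2 - 2 * q) * Real.cosh s ^ (2 - 2 * q) + (2 * q - 1) * Real.cosh s ^ (-(2 * q))) s := by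
    intro s
    have h := (Real.hasDerivAt_sinh s).mul
      ((Real.hasDerivAt_cosh s).rpow_const (p := 1 - 2 * q) (Or.inl (Real.cosh_pos s).ne'))
    have hcp := Real.cosh_pos s
    refine h.congr_deriv ?_
    symm
    rw [show (1 - 2 * q - 1 : ℝ) = -(2 * q) by ring,
      show (1 - 2 * q : ℝ) = 1 + -(2 * q) by ring, Real.rpow_add hcp, Real.rpow_one,
      hE2 s, hE3 s]
    linear_combination ((2 * q - 1) * (Real.cosh s ^ (-q)) ^ 2) * hs2 s
  have habs : ∀ s : ℝ, |Real.sinh s| ≤ Real.cosh s := fun s => by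
    nlinarith [hs2 s, sq_abs (Real.sinh s), Real.cosh_pos s, abs_nonneg (Real.sinh s)]
  have hGint : Integrable (fun s : ℝ => Real.sinh s * Real.cosh s ^ (1 - 2 * q)) := by
    refine Integrable.mono' iA (Continuous.aestronglyMeasurable ?_)
      (Filter.Eventually.of_forall fun s => ?_)
    · exact Real.continuous_sinh.mul
        (Real.continuous_cosh.rpow_const (fun x => Or.inl (Real.cosh_pos x).ne'))
    · have hcp := Real.cosh_pos s
      rw [Real.norm_eq_abs, abs_mul, abs_of_nonneg (Real.rpow_nonneg hcp.le _),
        show (2 - 2 * q : ℝ) = 1 + (1 - 2 * q) by ring, Real.rpow_add hcp, Real.rpow_one]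
      exact mul_le_mul_of_nonneg_right (habs s) (Real.rpow_nonneg hcp.le _)
  have hzero : (∫ s : ℝ, ((2 - 2 * q) * Real.cosh s ^ (2 - 2 * q)
      + (2 * q - 1) * Real.cosh s ^ (-(2 * q)))) = 0 :=
    integral_eq_zero_of_hasDerivAt_of_integrable hG
      ((iA.const_mul _).add (iB.const_mul _)) hGint
  rw [integral_add (iA.const_mul _) (iB.const_mul _), integral_const_mul,
    integral_const_mul] at hzero
  refine ⟨by rw [e1]; exact (iA.const_mul _).sub (iB.const_mul _),
    by rw [e2]; exact iB.const_mul _, by rw [e3]; exact iA, ?_⟩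
  rw [e1, e2, e3, integral_sub (iA.const_mul _) (iB.const_mul _), integral_const_mul,
    integral_const_mul, integral_const_mul]
  linear_combination (1 - q) * hzero
end

section
/- Let q > 1, V₁(s) := q(q−1)/cosh²(s) and φ(s) := (cosh s)^{1−q}. If u : ℝ → ℝ is twice differentiable with u, u' ∈ L²(ℝ) and satisfies −u''(s) − V₁(s) u(s) = −(q−1)² u(s) for all s ∈ ℝ, then u is a scalar multiple of φ; that is, φ generates the eigenspace of −d²/ds² − V₁ associated with the eigenvalue −(q−1)². -/
open MeasureTheory Real

lemma key (q w : ℝ) (hq : 1 < q) (hw : 0 < w) (g : ℝ → ℝ)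
    (hg : ∀ s, HasDerivAt g (w * Real.cosh s ^ (2 * (q - 1))) s)
    (hu2 : MemLp (fun s => g s * phi q s) 2 volume) : False := by
  set a : ℝ := 2 * (q - 1) with ha
  have ha0 : 0 < a := by simp [ha]; linarith
  set K : ℝ := w * (2 : ℝ) ^ (-a) / a with hK
  have h2a : (0:ℝ) < (2:ℝ) ^ (-a) := Real.rpow_pos_of_pos two_pos _
  have hKpos : 0 < K := by
    apply div_pos (mul_pos hw h2a) ha0
  -- cosh s ^ a ≥ 2^{-a} * exp (a * s)
  have hcosh_lb : ∀ s : ℝ, (2:ℝ) ^ (-a) * Real.exp (a * s) ≤ Real.cosh s ^ a := by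
    intro s
    have h1 : Real.exp s / 2 ≤ Real.cosh s := by
      rw [Real.cosh_eq]
      have := Real.exp_pos (-s)
      linarith
    have h2 : (Real.exp s / 2) ^ a ≤ Real.cosh s ^ a :=
      Real.rpow_le_rpow (by positivity) h1 ha0.le
    calc (2:ℝ) ^ (-a) * Real.exp (a * s) = (Real.exp s / 2) ^ a := by
          rw [Real.div_rpow (Real.exp_pos s).le (by norm_num), Real.rpow_neg (by norm_num)]
          rw [mul_comm a s, Real.exp_mul]
          ring
      _ ≤ _ := h2
  -- G := g - K * exp (a s) is monotone
  have hG : ∀ s, HasDerivAt (fun s => g s - K * Real.exp (a * s))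
      (w * Real.cosh s ^ a - K * (Real.exp (a * s) * a)) s := by
    intro s
    have he : HasDerivAt (fun s : ℝ => Real.exp (a * s)) (Real.exp (a * s) * a) s := by
      have := (Real.hasDerivAt_exp (a * s)).comp s ((hasDerivAt_id s).const_mul a)
      simpa [Function.comp_def] using this
    exact (hg s).sub (he.const_mul K)
  have hGmono : Monotone (fun s => g s - K * Real.exp (a * s)) := by
    apply monotone_of_deriv_nonneg (fun s => (hG s).differentiableAt)
    intro s
    rw [(hG s).deriv]
    have := hcosh_lb s
    have hKa : K * (Real.exp (a*s) * a) = w * ((2:ℝ) ^ (-a) * Real.exp (a*s)) := by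
      rw [hK]; field_simp
    linarith [mul_le_mul_of_nonneg_left (hcosh_lb s) hw.le]
  -- lower bound for u on s ≥ 0
  have hphi_pos : ∀ s : ℝ, 0 < phi q s := fun s => Real.rpow_pos_of_pos (Real.cosh_pos s) _
  have hub : ∀ s : ℝ, 0 ≤ s → K * Real.exp ((q-1) * s) - |g 0 - K| ≤ g s * phi q s := by
    intro s hs
    have hg_lb : g 0 - K + K * Real.exp (a * s) ≤ g s := by
      have := hGmono hs
      simp only at this
      have : g 0 - K * Real.exp (a * 0) ≤ g s - K * Real.exp (a * s) := hGmono hs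
      rw [mul_zero, Real.exp_zero, mul_one] at this
      linarith
    have hphi_le : phi q s ≤ 1 := by
      have : Real.cosh s ^ (1 - q) ≤ (1:ℝ) ^ (1 - q) :=
        Real.rpow_le_rpow_of_nonpos one_pos (Real.one_le_cosh s) (by linarith)
      simpa [phi] using this
    have hphi_ge : Real.exp ((1 - q) * s) ≤ phi q s := by
      have h1 : Real.cosh s ≤ Real.exp s := by
        rw [Real.cosh_eq]
        have h2 := Real.exp_pos (-s)
        have h3 : Real.exp (-s) ≤ Real.exp s := Real.exp_le_exp.2 (by linarith)
        linarith
      have := Real.rpow_le_rpow_of_nonpos (Real.cosh_pos s) h1 (by linarith : 1 - q ≤ 0)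
      calc Real.exp ((1-q) * s) = Real.exp s ^ (1 - q) := by
            rw [mul_comm, Real.exp_mul]
        _ ≤ Real.cosh s ^ (1 - q) := this
        _ = phi q s := rfl
    have hexp : Real.exp (a * s) * phi q s ≥ Real.exp ((q - 1) * s) := by
      calc Real.exp (a * s) * phi q s ≥ Real.exp (a * s) * Real.exp ((1 - q) * s) :=
            mul_le_mul_of_nonneg_left hphi_ge (Real.exp_pos _).le
        _ = Real.exp ((q - 1) * s) := by
            rw [← Real.exp_add]; congr 1; simp [ha]; ring
    have h0phi := hphi_pos s
    nlinarith [abs_nonneg (g 0 - K), le_abs_self (g 0 - K), neg_abs_le (g 0 - K),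
      mul_le_mul_of_nonneg_right hg_lb h0phi.le]
  -- find S with g s * phi q s ≥ 1 for s ≥ S
  have htend : Filter.Tendsto (fun s : ℝ => K * Real.exp ((q-1) * s)) Filter.atTop Filter.atTop := by
    apply Filter.Tendsto.const_mul_atTop hKpos
    exact Real.tendsto_exp_atTop.comp (Filter.tendsto_id.const_mul_atTop (by linarith))
  obtain ⟨S, hS⟩ := (htend.eventually_ge_atTop (|g 0 - K| + 1)).and
    (Filter.eventually_ge_atTop 0) |>.exists_forall_of_atTop
  have hone : ∀ s ∈ Set.Ici S, 1 ≤ (g s * phi q s) ^ 2 := by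
    intro s hs
    obtain ⟨h1, h2⟩ := hS s hs
    have := hub s h2
    nlinarith
  have hint := hu2.integrable_sq
  have hlt := hint.measure_ge_lt_top (ε := 1) one_pos
  have hsub : Set.Ici S ⊆ {x | 1 ≤ (g x * phi q x) ^ 2} := fun s hs => hone s hs
  have := measure_mono (μ := volume) hsub
  rw [Real.volume_Ici] at this
  exact absurd (this.trans_lt hlt) (lt_irrefl ⊤)

/-- The eigenspace of `-d²/ds² - V₁` for the eigenvalue `-(q-1)²` is generated by `φ`:
any twice differentiable `L²` solution of `-u'' - V₁ u = -(q-1)² u` with `u' ∈ L²`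
is a scalar multiple of `φ`. -/
theorem eigenspace_generated_by_phi (q : ℝ) (hq : 1 < q)
    (u : ℝ → ℝ) (hu : Differentiable ℝ u) (hu' : Differentiable ℝ (deriv u))
    (hu2 : MemLp u 2 volume) (hu'2 : MemLp (deriv u) 2 volume)
    (hode : ∀ s : ℝ, -(deriv (deriv u) s) - V1 q s * u s = -((q - 1) ^ 2) * u s) :
    ∃ c : ℝ, ∀ s : ℝ, u s = c * phi q s := by
  have hcpos : ∀ s : ℝ, (0:ℝ) < Real.cosh s := Real.cosh_pos
  have hphi_pos : ∀ s : ℝ, 0 < phi q s := fun s => Real.rpow_pos_of_pos (hcpos s) _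
  -- derivative of phi
  set pd : ℝ → ℝ := fun s => Real.sinh s * (1 - q) * Real.cosh s ^ (1 - q - 1) with hpd_def
  have hphi' : ∀ s, HasDerivAt (phi q) (pd s) s := by
    intro s
    exact (Real.hasDerivAt_cosh s).rpow_const (Or.inl (hcpos s).ne')
  -- second derivative of phi
  have hpd' : ∀ s, HasDerivAt pd (((q - 1) ^ 2 - V1 q s) * phi q s) s := by
    intro s
    have h1 : HasDerivAt (fun s => Real.sinh s * (1 - q)) (Real.cosh s * (1 - q)) s :=
      (Real.hasDerivAt_sinh s).mul_const (1 - q)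
    have h2 : HasDerivAt (fun s => Real.cosh s ^ (1 - q - 1))
        (Real.sinh s * (1 - q - 1) * Real.cosh s ^ (1 - q - 1 - 1)) s :=
      (Real.hasDerivAt_cosh s).rpow_const (Or.inl (hcpos s).ne')
    have := h1.mul h2
    refine this.congr_deriv (Eq.symm ?_)
    have e1 : Real.cosh s ^ (1 - q - 1) = Real.cosh s ^ (1 - q) / Real.cosh s := by
      rw [Real.rpow_sub (hcpos s), Real.rpow_one]
    have e2 : Real.cosh s ^ (1 - q - 1 - 1) = Real.cosh s ^ (1 - q) / Real.cosh s / Real.cosh s := by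
      rw [Real.rpow_sub (hcpos s), Real.rpow_sub (hcpos s), Real.rpow_one]
    rw [e1, e2]
    have hs := Real.sinh_sq s
    have hc := (hcpos s).ne'
    simp only [phi, V1]
    field_simp
    ring_nf
    linear_combination (q - q^2) * hs
  -- second derivative of u
  have huu : ∀ s, HasDerivAt (deriv u) (((q - 1) ^ 2 - V1 q s) * u s) s := by
    intro s
    have h := (hu' s).hasDerivAt
    have : deriv (deriv u) s = ((q - 1) ^ 2 - V1 q s) * u s := by
      have := hode s; ring_nf at this ⊢; linarith
    rwa [this] at h
  -- Wronskian is constant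
  set W : ℝ → ℝ := fun s => deriv u s * phi q s - u s * pd s with hW_def
  have hW' : ∀ s, HasDerivAt W 0 s := by
    intro s
    have h := ((huu s).mul (hphi' s)).sub (((hu s).hasDerivAt).mul (hpd' s))
    refine h.congr_deriv (Eq.symm ?_)
    ring
  have hWconst : ∀ s, W s = W 0 :=
    fun s => is_const_of_deriv_eq_zero (fun x => (hW' x).differentiableAt)
      (fun x => (hW' x).deriv) s 0
  set w : ℝ := W 0 with hw_def
  -- g = u / phi
  set g : ℝ → ℝ := fun s => u s / phi q s with hg_def
  have hsq : ∀ s : ℝ, (phi q s) ^ 2 = Real.cosh s ^ (2 * (1 - q)) := by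
    intro s
    simp only [phi]
    rw [← Real.rpow_natCast (Real.cosh s ^ (1 - q)) 2, ← Real.rpow_mul (hcpos s).le]
    norm_num
    ring_nf
  have hg' : ∀ s, HasDerivAt g (w * Real.cosh s ^ (2 * (q - 1))) s := by
    intro s
    have h := ((hu s).hasDerivAt).div (hphi' s) (hphi_pos s).ne'
    have hnum : (deriv u s * phi q s - u s * pd s) / phi q s ^ 2
        = w * Real.cosh s ^ (2 * (q - 1)) := by
      have : deriv u s * phi q s - u s * pd s = w := hWconst s
      rw [this, hsq s]
      have hone : Real.cosh s ^ (2*(1-q)) * Real.cosh s ^ (2*(q-1)) = 1 := by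
        rw [← Real.rpow_add (hcpos s), show 2*(1-q) + 2*(q-1) = (0:ℝ) by ring,
          Real.rpow_zero]
      rw [div_eq_iff (by positivity : Real.cosh s ^ (2*(1-q)) ≠ 0)]
      calc w = w * (Real.cosh s ^ (2*(1-q)) * Real.cosh s ^ (2*(q-1))) := by
            rw [hone, mul_one]
        _ = w * Real.cosh s ^ (2*(q-1)) * Real.cosh s ^ (2*(1-q)) := by ring
    rwa [hnum] at h
  have hgu : ∀ s, g s * phi q s = u s := by
    intro s
    simp only [hg_def]
    exact div_mul_cancel₀ _ (hphi_pos s).ne'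
  rcases lt_trichotomy w 0 with hw | hw | hw
  · exfalso
    apply key q (-w) hq (by linarith) (fun s => -g s)
    · intro s
      have := (hg' s).neg
      refine this.congr_deriv (Eq.symm ?_)
      ring
    · have : (fun s => -g s * phi q s) = fun s => -(u s) := by
        funext s; rw [neg_mul, hgu s]
      rw [this]
      exact hu2.neg
  · -- w = 0 : g is constant
    have hgc : ∀ s, g s = g 0 := by
      intro s
      apply is_const_of_deriv_eq_zero (f := g)
      · intro x; exact (hg' x).differentiableAt
      · intro x
        rw [(hg' x).deriv, hw, zero_mul]
    refine ⟨g 0, fun s => ?_⟩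
    rw [← hgu s, hgc s]
  · exfalso
    apply key q w hq hw g hg'
    have : (fun s => g s * phi q s) = u := funext hgu
    rw [this]
    exact hu2
end

section
/- Let p > 2 and define w(s) := (cosh s)^{−2/(p−2)}. Then w is twice differentiable on ℝ and satisfies the ordinary differential equation −(p−2)²·w''(s) + 4·w(s) − 2p·w(s)^{p−1} = 0 for every s ∈ ℝ. -/
open Real

noncomputable def wOpt (p : ℝ) : ℝ → ℝ := fun s => Real.cosh s ^ (-(2 / (p - 2)))

lemma cosh_pos' (s : ℝ) : (0:ℝ) < Real.cosh s := Real.cosh_pos s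

lemma wOpt_hasDerivAt (p : ℝ) (s : ℝ) :
    HasDerivAt (wOpt p) (Real.sinh s * (-(2 / (p - 2))) *
      Real.cosh s ^ (-(2 / (p - 2)) - 1)) s := by
  have h := (Real.hasDerivAt_cosh s).rpow_const
    (p := -(2 / (p - 2))) (Or.inl (Real.cosh_pos s).ne')
  exact h

lemma wOpt_deriv (p : ℝ) : deriv (wOpt p) = fun s =>
    Real.sinh s * (-(2 / (p - 2))) * Real.cosh s ^ (-(2 / (p - 2)) - 1) := by
  funext s; exact (wOpt_hasDerivAt p s).deriv

lemma wOpt_deriv_hasDerivAt (p : ℝ) (s : ℝ) :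
    HasDerivAt (deriv (wOpt p))
      (Real.cosh s * (-(2 / (p - 2))) * Real.cosh s ^ (-(2 / (p - 2)) - 1) +
        Real.sinh s * (-(2 / (p - 2))) *
          (Real.sinh s * (-(2 / (p - 2)) - 1) * Real.cosh s ^ (-(2 / (p - 2)) - 1 - 1))) s := by
  rw [wOpt_deriv]
  have h1 : HasDerivAt (fun s => Real.sinh s * (-(2 / (p - 2))))
      (Real.cosh s * (-(2 / (p - 2)))) s := (Real.hasDerivAt_sinh s).mul_const _
  have h2 := (Real.hasDerivAt_cosh s).rpow_const
    (p := -(2 / (p - 2)) - 1) (Or.inl (Real.cosh_pos s).ne')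
  exact h1.mul h2

/-- `w(s) = (cosh s)^{-2/(p-2)}` is twice differentiable and solves the Euler–Lagrange
equation `-(p-2)² w'' + 4 w - 2p w^{p-1} = 0`. -/
theorem w_euler_lagrange (p : ℝ) (hp : 2 < p) :
    (Differentiable ℝ (wOpt p) ∧ Differentiable ℝ (deriv (wOpt p))) ∧
    ∀ s : ℝ, -((p - 2) ^ 2) * deriv (deriv (wOpt p)) s + 4 * wOpt p s -
      2 * p * wOpt p s ^ (p - 1) = 0 := by
  set a : ℝ := -(2 / (p - 2)) with ha
  have hp2 : p - 2 ≠ 0 := by linarith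
  constructor
  · exact ⟨fun s => (wOpt_hasDerivAt p s).differentiableAt,
      fun s => (wOpt_deriv_hasDerivAt p s).differentiableAt⟩
  · intro s
    have hd2 : deriv (deriv (wOpt p)) s =
        Real.cosh s * a * Real.cosh s ^ (a - 1) +
          Real.sinh s * a * (Real.sinh s * (a - 1) * Real.cosh s ^ (a - 1 - 1)) :=
      (wOpt_deriv_hasDerivAt p s).deriv
    set t : ℝ := Real.cosh s with hts
    have ht : (0:ℝ) < t := Real.cosh_pos s
    have hsinh : Real.sinh s ^ 2 = t ^ 2 - 1 := Real.sinh_sq s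
    have h1 : t ^ (a - 1) * t = t ^ a := by
      rw [← Real.rpow_add_one ht.ne']; ring_nf
    have h2 : t ^ (a - 1 - 1) * t ^ 2 = t ^ a := by
      have : t ^ (a - 1 - 1) * t ^ (2:ℝ) = t ^ a := by
        rw [← Real.rpow_add ht]; ring_nf
      simpa [Real.rpow_two] using this
    have h3 : (t ^ a) ^ (p - 1) = t ^ (a - 1 - 1) := by
      rw [← Real.rpow_mul ht.le]
      congr 1
      field_simp [ha]
      have hap : a * (p - 2) = -2 := by
        simp only [ha, neg_mul, div_mul_cancel₀, hp2, ne_eq, not_false_eq_true]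
      linear_combination hap
    have hA : (p - 2) ^ 2 * a ^ 2 = 4 := by
      rw [ha]; field_simp; ring
    have hB : (p - 2) ^ 2 * (a * (a - 1)) = 2 * p := by
      rw [ha]; field_simp; ring
    have hw : wOpt p s = t ^ a := rfl
    rw [hd2, hw, h3]
    linear_combination (-((p - 2) ^ 2 * a)) * h1 +
      (-((p - 2) ^ 2 * a * (a - 1)) * t ^ (a - 1 - 1)) * hsinh +
      (-((p - 2) ^ 2 * a * (a - 1))) * h2 + (-(t ^ a)) * hA + (t ^ (a - 1 - 1)) * hB
end
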